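/- A groupoid C is residually finite if and only if for every object X of C, the group Aut_C(X) is residually finite. -/

import Mathlib

open CategoryTheory

/-- A category is residually finite if any two distinct parallel morphisms
can be separated by a functor to a finite category. -/
def ResiduallyFiniteCat (C : Type*) [Category C] : Prop :=
  ∀ {X Y : C} (f g : X ⟶ Y), f ≠ g →
    ∃ (D : Type) (_ : SmallCategory D) (_ : FinCategory D) (F : C ⥤ D),
      F.map f ≠ F.map g

/-- A group is residually finite if distinct elements can be separated by
homomorphisms to finite groups. -/
def ResiduallyFiniteGroup (G : Type*) [Group G] : Prop :=
  ∀ f g : G, f ≠ g →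
    ∃ (D : Type) (_ : Group D) (_ : Fintype D) (φ : G →* D), φ f ≠ φ g

section Aux

variable {C : Type} [Groupoid C] (X : C) {D : Type} [Group D] (φ : Aut X →* D)

/-- turn a morphism in a groupoid into an iso -/
noncomputable def homIso {P Q : C} (h : P ⟶ Q) : P ≅ Q :=
  ⟨h, Groupoid.inv h, by simp, by simp⟩

@[simp] lemma homIso_hom {P Q : C} (h : P ⟶ Q) : (homIso h).hom = h := rfl

open Classical

/-- The separating functor to the one-object category of `D`. -/
noncomputable def sepFunctor : C ⥤ SingleObj D where
  obj _ := SingleObj.star D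
  map {P Q} h :=
    if hQ : Nonempty (Q ⟶ X) then
      φ (homIso (Groupoid.inv (Nonempty.some ⟨h ≫ hQ.some⟩) ≫ h ≫ hQ.some))
    else 1
  map_id P := by
    by_cases hP : Nonempty (P ⟶ X)
    · rw [dif_pos hP]
      have : Nonempty.some (⟨𝟙 P ≫ hP.some⟩ : Nonempty (P ⟶ X)) = hP.some := rfl
      rw [this, SingleObj.id_as_one]
      rw [show (homIso (Groupoid.inv hP.some ≫ 𝟙 P ≫ hP.some) : Aut X) = (1 : Aut X) by
        apply Iso.ext
        show Groupoid.inv hP.some ≫ 𝟙 P ≫ hP.some = 𝟙 X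
        simp]
      exact φ.map_one
    · rw [dif_neg hP, SingleObj.id_as_one]
  map_comp {P Q R} h k := by
    by_cases hR : Nonempty (R ⟶ X)
    · have hQ : Nonempty (Q ⟶ X) := ⟨k ≫ hR.some⟩
      rw [dif_pos hR, dif_pos hQ, dif_pos hR, SingleObj.comp_as_mul]
      erw [← φ.map_mul]
      congr 1
      apply Iso.ext
      show Groupoid.inv _ ≫ (h ≫ k) ≫ _ = (Groupoid.inv _ ≫ h ≫ _) ≫ (Groupoid.inv _ ≫ k ≫ _)
      have e1 : (Nonempty.some (⟨(h ≫ k) ≫ hR.some⟩ : Nonempty (P ⟶ X)))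
          = Nonempty.some (⟨h ≫ hQ.some⟩ : Nonempty (P ⟶ X)) := rfl
      have e2 : (Nonempty.some (⟨k ≫ hR.some⟩ : Nonempty (Q ⟶ X))) = hQ.some := rfl
      rw [e1, e2]
      simp
    · have hQ : ¬ Nonempty (Q ⟶ X) := fun ⟨t⟩ => hR ⟨Groupoid.inv k ≫ t⟩
      rw [dif_neg hR, dif_neg hR, dif_neg hQ, SingleObj.comp_as_mul, one_mul]

end Aux

/-- A groupoid is residually finite iff all of its automorphism groups are
residually finite. -/
theorem residuallyFinite_groupoid_iff (C : Type) [Groupoid C] :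
    ResiduallyFiniteCat C ↔ ∀ X : C, ResiduallyFiniteGroup (Aut X) := by
  constructor
  · intro hC X f g hfg
    obtain ⟨D, _, _, F, hF⟩ := hC f.hom g.hom (fun h => hfg (Iso.ext h))
    refine ⟨Aut (F.obj X), inferInstance, ?_, F.mapAut X, ?_⟩
    · exact Fintype.ofInjective (fun a => (a.hom, a.inv))
        (fun a b h => Iso.ext (congrArg Prod.fst h))
    · intro h
      exact hF (congrArg Iso.hom h)
  · intro hA X Y f g hfg
    have hY : Nonempty (Y ⟶ X) := ⟨Groupoid.inv f⟩
    set cY : Y ⟶ X := hY.some with hcY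
    set b : Aut X := (homIso (Groupoid.inv cY ≫ (Groupoid.inv g ≫ f) ≫ cY) : Aut X) with hbdef
    have hb : b ≠ (1 : Aut X) := by
      intro h
      apply hfg
      have h1 : Groupoid.inv cY ≫ (Groupoid.inv g ≫ f) ≫ cY = 𝟙 X := congrArg Iso.hom (hbdef ▸ h)
      have h2 := congrArg (fun z => cY ≫ z ≫ Groupoid.inv cY) h1
      simp at h2
      exact h2
    obtain ⟨D, _, _, φ, hφ⟩ := hA X _ 1 hb
    refine ⟨SingleObj D, inferInstance, inferInstance, sepFunctor X φ, ?_⟩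
    intro hmap
    apply hφ
    rw [φ.map_one]
    -- unfold the two maps
    have hf' : (sepFunctor X φ).map f
        = φ (homIso (Groupoid.inv (Nonempty.some ⟨f ≫ hY.some⟩) ≫ f ≫ hY.some)) := dif_pos hY
    have hg' : (sepFunctor X φ).map g
        = φ (homIso (Groupoid.inv (Nonempty.some ⟨g ≫ hY.some⟩) ≫ g ≫ hY.some)) := dif_pos hY
    set u : Aut X := homIso (Groupoid.inv (Nonempty.some (⟨f ≫ hY.some⟩ : Nonempty (X ⟶ X))) ≫ f ≫ hY.some)
    set v : Aut X := homIso (Groupoid.inv (Nonempty.some (⟨g ≫ hY.some⟩ : Nonempty (X ⟶ X))) ≫ g ≫ hY.some)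
    have huv : φ u = φ v := by rw [← hf', ← hg', hmap]
    have key : u = b * v := by
      apply Iso.ext
      show u.hom = v.hom ≫ b.hom
      have : (Nonempty.some (⟨f ≫ hY.some⟩ : Nonempty (X ⟶ X)))
          = Nonempty.some (⟨g ≫ hY.some⟩ : Nonempty (X ⟶ X)) := rfl
      simp [u, v, b, homIso, this, hcY]
    have h3 : φ b * φ v = 1 * φ v :=
      calc φ b * φ v = φ (b * v) := (φ.map_mul _ _).symm
        _ = φ u := by rw [← key]
        _ = φ v := huv
        _ = 1 * φ v := (one_mul _).symm
    exact mul_right_cancel h3
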